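/- arXiv:1902.00435 — 7 statements merged into one kernel-verified Lean document; each statement's English description precedes it below -/
import Mathlib

section
/- Prefix/suffix-closure of monitorable fragments over finfinite traces: (i) if φ is in the safety fragment (built from tt, ff, [A]φ, conjunction, disjunction, greatest fixpoints, variables) and the finfinite trace s·g satisfies φ (where s is finite), then the finite trace s satisfies φ; (ii) if φ is in the cosafety fragment (built from tt, ff, ⟨A⟩φ, conjunction, disjunction, least fixpoints, variables) and the finite trace s satisfies φ, then every extension s·g satisfies φ. -/
inductive HFrm (Act : Type) : Type
  | tt : HFrm Act
  | ff : HFrm Act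
  | orf : HFrm Act → HFrm Act → HFrm Act
  | andf : HFrm Act → HFrm Act → HFrm Act
  | dia : Set Act → HFrm Act → HFrm Act
  | box : Set Act → HFrm Act → HFrm Act
  | fmin : ℕ → HFrm Act → HFrm Act
  | fmax : ℕ → HFrm Act → HFrm Act
  | var : ℕ → HFrm Act

/-- Finfinite traces: finite or infinite sequences of actions. -/
abbrev FTrc (Act : Type) := List Act ⊕ (ℕ → Act)

/-- Prepending an action to a finfinite trace. -/
def fcons {Act : Type} (a : Act) : FTrc Act → FTrc Act
  | Sum.inl s => Sum.inl (a :: s)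
  | Sum.inr t => Sum.inr (fun i => match i with | 0 => a | j + 1 => t j)

/-- Finfinite linear-time semantics of recHML. -/
def fsem {Act : Type} : HFrm Act → (ℕ → Set (FTrc Act)) → Set (FTrc Act)
  | HFrm.tt, _ => Set.univ
  | HFrm.ff, _ => ∅
  | HFrm.orf φ ψ, σ => fsem φ σ ∪ fsem ψ σ
  | HFrm.andf φ ψ, σ => fsem φ σ ∩ fsem ψ σ
  | HFrm.dia A φ, σ => {g | ∃ a ∈ A, ∃ g', g = fcons a g' ∧ g' ∈ fsem φ σ}
  | HFrm.box A φ, σ => {g | ∀ a ∈ A, ∀ g', g = fcons a g' → g' ∈ fsem φ σ}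
  | HFrm.fmin X φ, σ => ⋂₀ {T | fsem φ (Function.update σ X T) ⊆ T}
  | HFrm.fmax X φ, σ => ⋃₀ {T | T ⊆ fsem φ (Function.update σ X T)}
  | HFrm.var X, σ => σ X

/-- Free recursion variables of a formula. -/
def fv {Act : Type} : HFrm Act → Finset ℕ
  | HFrm.tt => ∅
  | HFrm.ff => ∅
  | HFrm.orf φ ψ => fv φ ∪ fv ψ
  | HFrm.andf φ ψ => fv φ ∪ fv ψ
  | HFrm.dia _ φ => fv φ
  | HFrm.box _ φ => fv φ
  | HFrm.fmin X φ => fv φ \ {X}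
  | HFrm.fmax X φ => fv φ \ {X}
  | HFrm.var X => {X}

/-- `Guarded G φ` says every fixpoint variable (together with the currently
unguarded bound variables `G`) occurs under a modality within its binder. -/
def Guarded {Act : Type} : Finset ℕ → HFrm Act → Prop
  | _, HFrm.tt => True
  | _, HFrm.ff => True
  | G, HFrm.orf φ ψ => Guarded G φ ∧ Guarded G ψ
  | G, HFrm.andf φ ψ => Guarded G φ ∧ Guarded G ψ
  | _, HFrm.dia _ φ => Guarded ∅ φ
  | _, HFrm.box _ φ => Guarded ∅ φ
  | G, HFrm.fmin X φ => Guarded (insert X G) φ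
  | G, HFrm.fmax X φ => Guarded (insert X G) φ
  | G, HFrm.var X => X ∉ G

/-- The safety fragment over finfinite traces: tt, ff, [A]φ, ∨, ∧, max, X. -/
inductive InSafe {Act : Type} : HFrm Act → Prop
  | tt : InSafe HFrm.tt
  | ff : InSafe HFrm.ff
  | box (A : Set Act) {φ : HFrm Act} : InSafe φ → InSafe (HFrm.box A φ)
  | orf {φ ψ : HFrm Act} : InSafe φ → InSafe ψ → InSafe (HFrm.orf φ ψ)
  | andf {φ ψ : HFrm Act} : InSafe φ → InSafe ψ → InSafe (HFrm.andf φ ψ)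
  | fmax (X : ℕ) {φ : HFrm Act} : InSafe φ → InSafe (HFrm.fmax X φ)
  | var (X : ℕ) : InSafe (HFrm.var X)

/-- The cosafety fragment over finfinite traces: tt, ff, ⟨A⟩φ, ∨, ∧, min, X. -/
inductive InCosafe {Act : Type} : HFrm Act → Prop
  | tt : InCosafe HFrm.tt
  | ff : InCosafe HFrm.ff
  | dia (A : Set Act) {φ : HFrm Act} : InCosafe φ → InCosafe (HFrm.dia A φ)
  | orf {φ ψ : HFrm Act} : InCosafe φ → InCosafe ψ → InCosafe (HFrm.orf φ ψ)
  | andf {φ ψ : HFrm Act} : InCosafe φ → InCosafe ψ → InCosafe (HFrm.andf φ ψ)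
  | fmin (X : ℕ) {φ : HFrm Act} : InCosafe φ → InCosafe (HFrm.fmin X φ)
  | var (X : ℕ) : InCosafe (HFrm.var X)

/-- Appending a finite trace in front of a finfinite trace. -/
def fappend {Act : Type} : List Act → FTrc Act → FTrc Act
  | [], g => g
  | a :: s, g => fcons a (fappend s g)

section Aux
variable {Act : Type}

/-- Prefix-closed sets of finfinite traces. -/
def PrefCl (S : Set (FTrc Act)) : Prop :=
  ∀ s g, fappend s g ∈ S → (Sum.inl s : FTrc Act) ∈ S

/-- Extension-closed sets of finfinite traces. -/
def ExtCl (S : Set (FTrc Act)) : Prop :=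
  ∀ s g, (Sum.inl s : FTrc Act) ∈ S → fappend s g ∈ S

lemma fcons_inl {a : Act} {x : FTrc Act} {l : List Act}
    (h : fcons a x = Sum.inl l) : ∃ l', x = Sum.inl l' ∧ l = a :: l' := by
  cases x with
  | inl s =>
      refine ⟨s, rfl, ?_⟩
      have := h
      simp [fcons] at this
      exact this.symm
  | inr t => simp [fcons] at h

lemma fappend_inl {s : List Act} {g : FTrc Act} {l : List Act}
    (h : fappend s g = Sum.inl l) : ∃ t, g = Sum.inl t ∧ l = s ++ t := by
  induction s generalizing l with
  | nil => exact ⟨l, h, rfl⟩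
  | cons a s ih =>
      have h' : fcons a (fappend s g) = Sum.inl l := h
      obtain ⟨l', hl', rfl⟩ := fcons_inl h'
      obtain ⟨t, ht, rfl⟩ := ih hl'
      exact ⟨t, ht, rfl⟩

lemma fappend_append (s t : List Act) (g : FTrc Act) :
    fappend (s ++ t) g = fappend s (fappend t g) := by
  induction s with
  | nil => rfl
  | cons a s ih => simp [fappend, ih]

lemma update_subset {σ σ' : ℕ → Set (FTrc Act)} {X : ℕ} {T T' : Set (FTrc Act)}
    (h : ∀ Y, σ Y ⊆ σ' Y) (hT : T ⊆ T') :
    ∀ Y, Function.update σ X T Y ⊆ Function.update σ' X T' Y := by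
  intro Y
  by_cases hY : Y = X
  · subst hY; simp only [Function.update_self]; exact hT
  · simp only [Function.update_of_ne hY]; exact h Y

lemma fsem_mono (φ : HFrm Act) : ∀ σ σ' : ℕ → Set (FTrc Act),
    (∀ X, σ X ⊆ σ' X) → fsem φ σ ⊆ fsem φ σ' := by
  induction φ with
  | tt => intro σ σ' _; simp [fsem]
  | ff => intro σ σ' _; simp [fsem]
  | orf φ ψ ihφ ihψ =>
      intro σ σ' h; exact Set.union_subset_union (ihφ _ _ h) (ihψ _ _ h)
  | andf φ ψ ihφ ihψ =>
      intro σ σ' h; exact Set.inter_subset_inter (ihφ _ _ h) (ihψ _ _ h)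
  | dia A φ ih =>
      rintro σ σ' h x ⟨a, ha, g', hg, hm⟩
      exact ⟨a, ha, g', hg, ih _ _ h hm⟩
  | box A φ ih =>
      intro σ σ' h x hx a ha g' hg
      exact ih _ _ h (hx a ha g' hg)
  | fmin X φ ih =>
      intro σ σ' h x hx
      refine Set.mem_sInter.mpr (fun T hT => ?_)
      refine Set.mem_sInter.mp hx T ?_
      exact fun y hy => hT (ih _ _ (update_subset h (subset_refl T)) hy)
  | fmax X φ ih =>
      rintro σ σ' h x hx
      obtain ⟨T, hT, hxT⟩ := hx
      exact ⟨T, fun y hy => ih _ _ (update_subset h (subset_refl T)) (hT hy), hxT⟩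
  | var X => intro σ σ' h; exact h X

lemma lfp_pre (φ : HFrm Act) (X : ℕ) (σ : ℕ → Set (FTrc Act)) :
    fsem φ (Function.update σ X (fsem (HFrm.fmin X φ) σ)) ⊆ fsem (HFrm.fmin X φ) σ := by
  intro x hx
  refine Set.mem_sInter.mpr (fun T hT => ?_)
  apply hT
  refine fsem_mono φ _ _ ?_ hx
  refine update_subset (fun Y => subset_refl _) ?_
  exact fun y hy => Set.mem_sInter.mp hy T hT

/-- Prefix closure of a set. -/
def pcl (T : Set (FTrc Act)) : Set (FTrc Act) :=
  T ∪ {x | ∃ s g, x = Sum.inl s ∧ fappend s g ∈ T}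

lemma subset_pcl (T : Set (FTrc Act)) : T ⊆ pcl T := Set.subset_union_left

lemma pcl_prefcl (T : Set (FTrc Act)) : PrefCl (pcl T) := by
  intro s g hx
  rcases hx with h | ⟨s', g', heq, hT⟩
  · exact Or.inr ⟨s, g, rfl, h⟩
  · obtain ⟨t, ht, rfl⟩ := fappend_inl heq
    refine Or.inr ⟨s, fappend t g', rfl, ?_⟩
    rwa [← fappend_append]

lemma pcl_subset {T S : Set (FTrc Act)} (hTS : T ⊆ S) (hS : PrefCl S) : pcl T ⊆ S := by
  rintro x (h | ⟨s, g, rfl, hT⟩)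
  · exact hTS h
  · exact hS s g (hTS hT)

lemma safe_prefcl {φ : HFrm Act} (h : InSafe φ) :
    ∀ σ : ℕ → Set (FTrc Act), (∀ X ∈ fv φ, PrefCl (σ X)) → PrefCl (fsem φ σ) := by
  induction h with
  | tt => intro σ _ s g _; exact Set.mem_univ _
  | ff => intro σ _ s g hx; exact absurd hx (Set.notMem_empty _)
  | box A hφ ih =>
      intro σ hσ s g hx a ha g' heq
      cases g' with
      | inl s' =>
          have hs : s = a :: s' := by
            have := heq
            simp [fcons] at this
            exact this
          subst hs
          have hmem : fappend s' g ∈ fsem _ σ := hx a ha (fappend s' g) rfl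
          exact ih σ hσ s' g hmem
      | inr t => simp [fcons] at heq
  | orf hφ hψ ihφ ihψ =>
      intro σ hσ s g hx
      rcases hx with h | h
      · exact Or.inl (ihφ σ (fun X hX => hσ X (by simp [fv, hX])) s g h)
      · exact Or.inr (ihψ σ (fun X hX => hσ X (by simp [fv, hX])) s g h)
  | andf hφ hψ ihφ ihψ =>
      intro σ hσ s g hx
      exact ⟨ihφ σ (fun X hX => hσ X (by simp [fv, hX])) s g hx.1,
             ihψ σ (fun X hX => hσ X (by simp [fv, hX])) s g hx.2⟩
  | @fmax X ψ hφ ih =>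
      intro σ hσ s g hx
      obtain ⟨T, hT, hxT⟩ := hx
      refine ⟨pcl T, ?_, Or.inr ⟨s, g, rfl, hxT⟩⟩
      have hmono : T ⊆ fsem ψ (Function.update σ X (pcl T)) := fun y hy =>
        fsem_mono ψ _ _ (update_subset (fun Y => subset_refl _) (subset_pcl T)) (hT hy)
      have hpc : PrefCl (fsem ψ (Function.update σ X (pcl T))) := by
        apply ih
        intro Y hY
        by_cases hYX : Y = X
        · subst hYX; simp only [Function.update_self]; exact pcl_prefcl T
        · simp only [Function.update_of_ne hYX]
          exact hσ Y (by simp [fv, hY, hYX])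
      exact pcl_subset hmono hpc
  | var X =>
      intro σ hσ
      exact hσ X (by simp [fv])

lemma cosafe_extcl {φ : HFrm Act} (h : InCosafe φ) :
    ∀ σ : ℕ → Set (FTrc Act), (∀ X ∈ fv φ, ExtCl (σ X)) → ExtCl (fsem φ σ) := by
  induction h with
  | tt => intro σ _ s g _; exact Set.mem_univ _
  | ff => intro σ _ s g hx; exact absurd hx (Set.notMem_empty _)
  | dia A hφ ih =>
      intro σ hσ s g hx
      obtain ⟨a, ha, g', heq, hm⟩ := hx
      obtain ⟨s', hs', rfl⟩ := fcons_inl heq.symm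
      subst hs'
      exact ⟨a, ha, fappend s' g, rfl, ih σ hσ s' g hm⟩
  | orf hφ hψ ihφ ihψ =>
      intro σ hσ s g hx
      rcases hx with h | h
      · exact Or.inl (ihφ σ (fun X hX => hσ X (by simp [fv, hX])) s g h)
      · exact Or.inr (ihψ σ (fun X hX => hσ X (by simp [fv, hX])) s g h)
  | andf hφ hψ ihφ ihψ =>
      intro σ hσ s g hx
      exact ⟨ihφ σ (fun X hX => hσ X (by simp [fv, hX])) s g hx.1,
             ihψ σ (fun X hX => hσ X (by simp [fv, hX])) s g hx.2⟩
  | @fmin X ψ hφ ih =>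
      intro σ hσ s g hx
      set L := fsem (HFrm.fmin X ψ) σ with hL
      set T₀ : Set (FTrc Act) :=
        {x | x ∈ L ∧ ∀ s' g', x = Sum.inl s' → fappend s' g' ∈ L} with hT₀
      have hT₀L : T₀ ⊆ L := fun y hy => hy.1
      have hext : ExtCl T₀ := by
        intro s' g' hmem
        obtain ⟨h1, h2⟩ := hmem
        refine ⟨h2 s' g' rfl, ?_⟩
        intro s'' g'' heq
        obtain ⟨t, rfl, rfl⟩ := fappend_inl heq
        rw [fappend_append]
        exact h2 s' (fappend t g'') rfl
      have hpre : fsem ψ (Function.update σ X T₀) ⊆ T₀ := by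
        intro x hxm
        have hsub : fsem ψ (Function.update σ X T₀) ⊆ L := fun y hy =>
          lfp_pre ψ X σ (fsem_mono ψ _ _ (update_subset (fun Y => subset_refl _) hT₀L) hy)
        refine ⟨hsub hxm, ?_⟩
        intro s' g' heq
        subst heq
        have he : ExtCl (fsem ψ (Function.update σ X T₀)) := by
          apply ih
          intro Y hY
          by_cases hYX : Y = X
          · subst hYX; simp only [Function.update_self]; exact hext
          · simp only [Function.update_of_ne hYX]
            exact hσ Y (by simp [fv, hY, hYX])
        exact hsub (he s' g' hxm)
      have hLT₀ : L ⊆ T₀ := fun y hy => Set.mem_sInter.mp hy T₀ hpre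
      exact (hLT₀ hx).2 s g rfl
  | var X =>
      intro σ hσ
      exact hσ X (by simp [fv])

end Aux

/-- Prefix/suffix-closure of the monitorable fragments over finfinite traces:
(i) safety formulae are prefix-closed; (ii) cosafety formulae are closed under
extensions. -/
theorem fragment_prefix_suffix_closure {Act : Type} (φ : HFrm Act)
    (hcl : fv φ = ∅) (hg : Guarded ∅ φ)
    (σ : ℕ → Set (FTrc Act)) (s : List Act) (g : FTrc Act) :
    (InSafe φ → fappend s g ∈ fsem φ σ → (Sum.inl s : FTrc Act) ∈ fsem φ σ) ∧
    (InCosafe φ → (Sum.inl s : FTrc Act) ∈ fsem φ σ → fappend s g ∈ fsem φ σ) := by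
  constructor
  · intro hs hx
    exact safe_prefcl hs σ (fun X hX => absurd hX (by simp [hcl])) s g hx
  · intro hs hx
    exact cosafe_extcl hs σ (fun X hX => absurd hX (by simp [hcl])) s g hx
end

section
/- For every recHML formula φ, the set of infinite traces satisfying φ under the finfinite semantics equals the set of infinite traces satisfying φ under the infinite-trace linear-time semantics: ⟦φ⟧_F ∩ Act^ω = ⟦φ⟧_L. -/
/-- Linear-time semantics of recHML over infinite traces. -/
def lsem {Act : Type} : HFrm Act → (ℕ → Set (ℕ → Act)) → Set (ℕ → Act)
  | HFrm.tt, _ => Set.univ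
  | HFrm.ff, _ => ∅
  | HFrm.orf φ ψ, σ => lsem φ σ ∪ lsem ψ σ
  | HFrm.andf φ ψ, σ => lsem φ σ ∩ lsem ψ σ
  | HFrm.dia A φ, σ => {t | t 0 ∈ A ∧ (fun i => t (i + 1)) ∈ lsem φ σ}
  | HFrm.box A φ, σ => {t | t 0 ∈ A → (fun i => t (i + 1)) ∈ lsem φ σ}
  | HFrm.fmin X φ, σ => ⋂₀ {T | lsem φ (Function.update σ X T) ⊆ T}
  | HFrm.fmax X φ, σ => ⋃₀ {T | T ⊆ lsem φ (Function.update σ X T)}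
  | HFrm.var X, σ => σ X

namespace FsemLsemAux

def rset {Act : Type} (T : Set (FTrc Act)) : Set (ℕ → Act) :=
  {t | (Sum.inr t : FTrc Act) ∈ T}

lemma mem_rset {Act : Type} {T : Set (FTrc Act)} {t : ℕ → Act} :
    t ∈ rset T ↔ (Sum.inr t : FTrc Act) ∈ T := Iff.rfl

lemma rset_update {Act : Type} (σ : ℕ → Set (FTrc Act)) (X : ℕ) (T : Set (FTrc Act)) :
    (fun Y => rset (Function.update σ X T Y)) =
      Function.update (fun Y => rset (σ Y)) X (rset T) := by
  funext Y
  rcases eq_or_ne Y X with h | h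
  · subst h; simp
  · simp [Function.update_of_ne h]

lemma fcons_inr {Act : Type} (t : ℕ → Act) :
    fcons (t 0) (Sum.inr (fun i => t (i + 1))) = Sum.inr t := by
  simp only [fcons]
  congr 1
  funext i
  cases i <;> rfl

lemma main {Act : Type} (φ : HFrm Act) (σ : ℕ → Set (FTrc Act)) :
    rset (fsem φ σ) = lsem φ (fun Y => rset (σ Y)) := by
  induction φ generalizing σ with
  | tt => rfl
  | ff => rfl
  | orf φ ψ ihφ ihψ =>
      show rset (fsem φ σ) ∪ rset (fsem ψ σ) = _
      rw [ihφ, ihψ]; rfl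
  | andf φ ψ ihφ ihψ =>
      show rset (fsem φ σ) ∩ rset (fsem ψ σ) = _
      rw [ihφ, ihψ]; rfl
  | dia A φ ih =>
      have ihm : ∀ u : ℕ → Act, (Sum.inr u : FTrc Act) ∈ fsem φ σ ↔
          u ∈ lsem φ (fun Y => rset (σ Y)) :=
        fun u => Set.ext_iff.mp (ih σ) u
      ext t
      constructor
      · rintro ⟨a, ha, g', hg, hg'⟩
        cases g' with
        | inl s => simp [fcons] at hg
        | inr u =>
            have ht : t = fun i => match i with | 0 => a | j + 1 => u j :=
              Sum.inr_injective (α := List Act) (by simpa [fcons] using hg)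
            subst ht
            exact ⟨ha, (ihm u).mp hg'⟩
      · rintro ⟨ha, h⟩
        exact ⟨t 0, ha, Sum.inr (fun i => t (i + 1)), (fcons_inr t).symm,
          (ihm _).mpr h⟩
  | box A φ ih =>
      have ihm : ∀ u : ℕ → Act, (Sum.inr u : FTrc Act) ∈ fsem φ σ ↔
          u ∈ lsem φ (fun Y => rset (σ Y)) :=
        fun u => Set.ext_iff.mp (ih σ) u
      ext t
      constructor
      · intro h ha
        exact (ihm _).mp (h (t 0) ha (Sum.inr (fun i => t (i + 1))) (fcons_inr t).symm)
      · rintro h a ha g' hg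
        cases g' with
        | inl s => simp [fcons] at hg
        | inr u =>
            have ht : t = fun i => match i with | 0 => a | j + 1 => u j :=
              Sum.inr_injective (α := List Act) (by simpa [fcons] using hg)
            subst ht
            exact (ihm u).mpr (h ha)
  | fmin X φ ih =>
      ext t
      show (Sum.inr t : FTrc Act) ∈ ⋂₀ {T | fsem φ (Function.update σ X T) ⊆ T} ↔
        t ∈ ⋂₀ {S | lsem φ (Function.update (fun Y => rset (σ Y)) X S) ⊆ S}
      simp only [Set.mem_sInter, Set.mem_setOf_eq]
      constructor
      · intro h S hS
        set T : Set (FTrc Act) := {g | ∀ u : ℕ → Act, g = Sum.inr u → u ∈ S} with hTdef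
        have hrT : rset T = S := by
          ext u; constructor
          · intro hu; exact hu u rfl
          · intro hu v hv; cases Sum.inr_injective hv; exact hu
        have hpre : fsem φ (Function.update σ X T) ⊆ T := by
          intro g hg u hu
          subst hu
          have hm : u ∈ rset (fsem φ (Function.update σ X T)) := hg
          rw [ih, rset_update, hrT] at hm
          exact hS hm
        exact h T hpre t rfl
      · intro h T hT
        have hS : lsem φ (Function.update (fun Y => rset (σ Y)) X (rset T)) ⊆ rset T := by
          rw [← rset_update, ← ih]
          intro u hu
          exact hT hu
        exact h (rset T) hS
  | fmax X φ ih =>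
      ext t
      show (Sum.inr t : FTrc Act) ∈ ⋃₀ {T | T ⊆ fsem φ (Function.update σ X T)} ↔
        t ∈ ⋃₀ {S | S ⊆ lsem φ (Function.update (fun Y => rset (σ Y)) X S)}
      simp only [Set.mem_sUnion, Set.mem_setOf_eq]
      constructor
      · rintro ⟨T, hT, ht⟩
        refine ⟨rset T, ?_, ht⟩
        rw [← rset_update, ← ih]
        intro u hu
        exact hT hu
      · rintro ⟨S, hS, ht⟩
        set T : Set (FTrc Act) := {g | ∃ u : ℕ → Act, g = Sum.inr u ∧ u ∈ S} with hTdef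
        have hrT : rset T = S := by
          ext u; constructor
          · rintro ⟨v, hv, hvS⟩; cases Sum.inr_injective hv; exact hvS
          · intro hu; exact ⟨u, rfl, hu⟩
        refine ⟨T, ?_, ⟨t, rfl, ht⟩⟩
        rintro g ⟨u, rfl, hu⟩
        have hm : u ∈ lsem φ (Function.update (fun Y => rset (σ Y)) X (rset T)) := by
          rw [hrT]; exact hS hu
        rw [← rset_update, ← ih] at hm
        exact hm
  | var X => rfl

end FsemLsemAux

/-- The infinite traces satisfying a closed formula under the finfinite semantics
are exactly the traces satisfying it under the infinite-trace linear-time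
semantics: `⟦φ⟧_F ∩ Act^ω = ⟦φ⟧_L`. -/
theorem fsem_restricted_to_infinite_eq_lsem {Act : Type} (φ : HFrm Act)
    (hcl : fv φ = ∅) (σ : ℕ → Set (FTrc Act)) :
    {t : ℕ → Act | (Sum.inr t : FTrc Act) ∈ fsem φ σ} =
      lsem φ (fun X => {t : ℕ → Act | (Sum.inr t : FTrc Act) ∈ σ X}) := by
  exact FsemLsemAux.main φ σ
end

section
/- If a process p represents the finfinite trace g, then g satisfies φ under the finfinite semantics if and only if p satisfies φ under the branching-time semantics, for every closed recHML formula φ. -/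
/-- Composition of single transitions along an explicit trace
(a finite sequence of actions and τ's). -/
inductive ESteps {Act S : Type} (tr : S → Option Act → S → Prop) :
    S → List (Option Act) → S → Prop
  | refl (s : S) : ESteps tr s [] s
  | step {s s' s'' : S} {μ : Option Act} {l : List (Option Act)} :
      tr s μ s' → ESteps tr s' l s'' → ESteps tr s (μ :: l) s''

/-- Weak transition sequences: consume the external actions of a finite trace,
absorbing τ-steps. -/
inductive WSteps {Act S : Type} (tr : S → Option Act → S → Prop) :
    S → List Act → S → Prop
  | refl (s : S) : WSteps tr s [] s
  | tau {s s' s'' : S} {l : List Act} :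
      tr s none s' → WSteps tr s' l s'' → WSteps tr s l s''
  | act {s s' s'' : S} {a : Act} {l : List Act} :
      tr s (some a) s' → WSteps tr s' l s'' → WSteps tr s (a :: l) s''

/-- Branching-time semantics of recHML over processes of an LTS,
with weak modalities. -/
def bsem {Act Proc : Type} (tr : Proc → Option Act → Proc → Prop) :
    HFrm Act → (ℕ → Set Proc) → Set Proc
  | HFrm.tt, _ => Set.univ
  | HFrm.ff, _ => ∅
  | HFrm.orf φ ψ, ρ => bsem tr φ ρ ∪ bsem tr ψ ρ
  | HFrm.andf φ ψ, ρ => bsem tr φ ρ ∩ bsem tr ψ ρ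
  | HFrm.dia A φ, ρ => {p | ∃ a ∈ A, ∃ q, WSteps tr p [a] q ∧ q ∈ bsem tr φ ρ}
  | HFrm.box A φ, ρ => {p | ∀ a ∈ A, ∀ q, WSteps tr p [a] q → q ∈ bsem tr φ ρ}
  | HFrm.fmin X φ, ρ => ⋂₀ {P | bsem tr φ (Function.update ρ X P) ⊆ P}
  | HFrm.fmax X φ, ρ => ⋃₀ {P | P ⊆ bsem tr φ (Function.update ρ X P)}
  | HFrm.var X, ρ => ρ X

/-- `FPrefix s g` : the finite trace `s` is a prefix of the finfinite trace `g`. -/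
def FPrefix {Act : Type} (s : List Act) : FTrc Act → Prop
  | Sum.inl l => s <+: l
  | Sum.inr t => s = (List.range s.length).map t

/-- A process is a trace-process when it (and every process reachable from it)
is deterministic. -/
def IsTraceProc {Act Proc : Type} (tr : Proc → Option Act → Proc → Prop)
    (p : Proc) : Prop :=
  ∀ q : Proc, (∃ s : List (Option Act), ESteps tr p s q) →
    ∀ (μ μ' : Option Act) (r r' : Proc), tr q μ r → tr q μ' r' → μ = μ' ∧ r = r'

/-- A trace-process `p` represents the finfinite trace `g` when `p` can weakly
perform a finite trace `s` iff `s` is a prefix of `g`. -/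
def Represents {Act Proc : Type} (tr : Proc → Option Act → Proc → Prop)
    (p : Proc) (g : FTrc Act) : Prop :=
  IsTraceProc tr p ∧ ∀ s : List Act, (∃ q, WSteps tr p s q) ↔ FPrefix s g


section Aux

variable {Act Proc : Type} {tr : Proc → Option Act → Proc → Prop}

lemma esteps_append {p q r : Proc} {l l' : List (Option Act)}
    (h : ESteps tr p l q) (h' : ESteps tr q l' r) : ESteps tr p (l ++ l') r := by
  induction h with
  | refl => simpa
  | step h1 _ ih => exact ESteps.step h1 (ih h')

lemma isTraceProc_of_esteps {p q : Proc} {l : List (Option Act)}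
    (htp : IsTraceProc tr p) (h : ESteps tr p l q) : IsTraceProc tr q := by
  intro q' hq'
  obtain ⟨s, hs⟩ := hq'
  exact htp q' ⟨l ++ s, esteps_append h hs⟩

lemma wsteps_to_esteps {p q : Proc} {s : List Act} (h : WSteps tr p s q) :
    ∃ l, ESteps tr p l q ∧ l.filterMap id = s := by
  induction h with
  | refl => exact ⟨[], ESteps.refl _, rfl⟩
  | tau h1 _ ih =>
    obtain ⟨l, he, hf⟩ := ih
    exact ⟨none :: l, ESteps.step h1 he, by simpa⟩
  | act h1 _ ih =>
    obtain ⟨l, he, hf⟩ := ih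
    exact ⟨some _ :: l, ESteps.step h1 he, by simp; exact hf⟩

lemma esteps_to_wsteps {p q : Proc} {l : List (Option Act)} (h : ESteps tr p l q) :
    WSteps tr p (l.filterMap id) q := by
  induction h with
  | refl => exact WSteps.refl _
  | @step s s' s'' μ l h1 h2 ih =>
    cases μ with
    | none => simpa using WSteps.tau h1 ih
    | some a => simpa using WSteps.act h1 ih

lemma wsteps_trans {p q r : Proc} {s s' : List Act}
    (h : WSteps tr p s q) (h' : WSteps tr q s' r) : WSteps tr p (s ++ s') r := by
  induction h with
  | refl => simpa
  | tau h1 _ ih => exact WSteps.tau h1 (ih h')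
  | act h1 _ ih => exact WSteps.act h1 (ih h')

lemma det_prefix {p q1 q2 : Proc} {l1 l2 : List (Option Act)}
    (h1 : ESteps tr p l1 q1) (htp : IsTraceProc tr p) (h2 : ESteps tr p l2 q2)
    (hlen : l1.length ≤ l2.length) :
    l1 <+: l2 ∧ ESteps tr q1 (l2.drop l1.length) q2 := by
  induction h1 generalizing l2 with
  | refl => exact ⟨List.nil_prefix, by simpa⟩
  | @step s s' s'' μ l hstep _ ih =>
    cases h2 with
    | refl => simp at hlen
    | @step _ t' _ μ' l' hstep' hrest =>
      have hdet := htp s ⟨[], ESteps.refl s⟩ μ μ' s' t' hstep hstep'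
      obtain ⟨rfl, rfl⟩ := hdet
      have htp' : IsTraceProc tr s' :=
        isTraceProc_of_esteps htp (ESteps.step hstep (ESteps.refl s'))
      have := ih htp' hrest (Nat.succ_le_succ_iff.mp (by simpa using hlen))
      exact ⟨List.cons_prefix_cons.mpr ⟨rfl, this.1⟩, by simpa using this.2⟩

lemma wsteps_det {p q r : Proc} {a : Act} {s : List Act}
    (htp : IsTraceProc tr p) (h1 : WSteps tr p [a] q) (h2 : WSteps tr p (a :: s) r) :
    ∃ r', WSteps tr q s r' := by
  by_cases hs : s = []
  · exact ⟨q, hs ▸ WSteps.refl q⟩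
  obtain ⟨l1, e1, f1⟩ := wsteps_to_esteps h1
  obtain ⟨l2, e2, f2⟩ := wsteps_to_esteps h2
  have hlen : l1.length ≤ l2.length := by
    by_contra hcon
    have := det_prefix e2 htp e1 (le_of_not_ge hcon)
    obtain ⟨⟨d, hd⟩, _⟩ := this
    rw [← hd, List.filterMap_append, f2] at f1
    simp at f1
    exact hs f1.1
  obtain ⟨⟨d, hd⟩, he⟩ := det_prefix e1 htp e2 hlen
  rw [← hd, List.filterMap_append, f1] at f2
  rw [← hd, List.drop_left] at he
  have hfd : d.filterMap id = s := by
    simpa using f2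
  exact ⟨r, hfd ▸ esteps_to_wsteps he⟩

lemma fprefix_nil {g : FTrc Act} : FPrefix [] g := by
  cases g with
  | inl l => exact List.nil_prefix
  | inr t => simp [FPrefix]

lemma fprefix_cons {a : Act} {s : List Act} {g : FTrc Act} :
    FPrefix (a :: s) (fcons a g) ↔ FPrefix s g := by
  cases g with
  | inl l => simp [FPrefix, fcons, List.cons_prefix_cons]
  | inr t =>
    have hcomp : ((fun i => match i with | 0 => a | j + 1 => t j) ∘ Nat.succ) = t := by
      funext j; rfl
    show a :: s = (List.range (s.length + 1)).map _ ↔ s = (List.range s.length).map t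
    rw [List.range_succ_eq_map, List.map_cons, List.map_map, hcomp]
    simp

lemma fcons_elim {a : Act} {g : FTrc Act} (h : FPrefix [a] g) :
    ∃ g', g = fcons a g' := by
  cases g with
  | inl l =>
    obtain ⟨r, hr⟩ := h
    exact ⟨Sum.inl r, by simp [fcons, ← hr]⟩
  | inr t =>
    have ha : a = t 0 := by
      have : [a] = [t 0] := by simpa [FPrefix, List.range_succ_eq_map] using h
      simpa using this
    refine ⟨Sum.inr (fun j => t (j + 1)), ?_⟩
    simp only [fcons]
    congr 1
    funext i
    cases i with
    | zero => exact ha.symm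
    | succ j => rfl

lemma represents_step {p q : Proc} {a : Act} {g : FTrc Act}
    (hrep : Represents tr p (fcons a g)) (hw : WSteps tr p [a] q) :
    Represents tr q g := by
  obtain ⟨htp, hiff⟩ := hrep
  obtain ⟨l, he, _⟩ := wsteps_to_esteps hw
  refine ⟨isTraceProc_of_esteps htp he, fun s => ⟨?_, ?_⟩⟩
  · rintro ⟨r, hr⟩
    have := (hiff (a :: s)).mp ⟨r, wsteps_trans hw hr⟩
    exact fprefix_cons.mp this
  · intro hpre
    obtain ⟨r, hr⟩ := (hiff (a :: s)).mpr (fprefix_cons.mpr hpre)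
    exact wsteps_det htp hw hr

lemma lin_to_branch (φ : HFrm Act) (σ : ℕ → Set (FTrc Act)) (ρ : ℕ → Set Proc)
    (henv : ∀ X ∈ fv φ, ∀ p g, Represents tr p g → g ∈ σ X → p ∈ ρ X) :
    ∀ p g, Represents tr p g → g ∈ fsem φ σ → p ∈ bsem tr φ ρ := by
  induction φ generalizing σ ρ with
  | tt => intro p g _ _; trivial
  | ff => intro p g _ hg; exact absurd hg (Set.notMem_empty g)
  | orf φ ψ ihφ ihψ =>
    intro p g hrep hg
    rcases hg with hg | hg
    · exact Or.inl (ihφ σ ρ (fun X hX => henv X (by simp [fv, hX])) p g hrep hg)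
    · exact Or.inr (ihψ σ ρ (fun X hX => henv X (by simp [fv, hX])) p g hrep hg)
  | andf φ ψ ihφ ihψ =>
    intro p g hrep hg
    exact ⟨ihφ σ ρ (fun X hX => henv X (by simp [fv, hX])) p g hrep hg.1,
           ihψ σ ρ (fun X hX => henv X (by simp [fv, hX])) p g hrep hg.2⟩
  | dia A φ ih =>
    intro p g hrep hg
    obtain ⟨a, ha, g', rfl, hmem⟩ := hg
    obtain ⟨q, hq⟩ := (hrep.2 [a]).mpr (fprefix_cons.mpr fprefix_nil)
    exact ⟨a, ha, q, hq,
      ih σ ρ (fun X hX => henv X (by simpa [fv] using hX)) q g'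
        (represents_step hrep hq) hmem⟩
  | box A φ ih =>
    intro p g hrep hg a ha q hq
    obtain ⟨g', rfl⟩ := fcons_elim ((hrep.2 [a]).mp ⟨q, hq⟩)
    exact ih σ ρ (fun X hX => henv X (by simpa [fv] using hX)) q g'
      (represents_step hrep hq) (hg a ha g' rfl)
  | fmin X φ ih =>
    intro p g hrep hg
    intro P hP
    set T : Set (FTrc Act) := {g' | ∀ p', Represents tr p' g' → p' ∈ P} with hTdef
    have henv' : ∀ Y ∈ fv φ, ∀ p'' g'', Represents tr p'' g'' →
        g'' ∈ Function.update σ X T Y → p'' ∈ Function.update ρ X P Y := by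
      intro Y hY p'' g'' hr h''
      by_cases hYX : Y = X
      · subst hYX
        rw [Function.update_self] at h'' ⊢
        exact h'' p'' hr
      · rw [Function.update_of_ne hYX] at h'' ⊢
        exact henv Y (by simp [fv, hY, hYX]) p'' g'' hr h''
    have hT : fsem φ (Function.update σ X T) ⊆ T := by
      intro g' hg' p' hrel
      exact hP (ih (Function.update σ X T) (Function.update ρ X P) henv' p' g' hrel hg')
    exact hg T hT p hrep
  | fmax X φ ih =>
    intro p g hrep hg
    obtain ⟨T, hT, hgT⟩ := hg
    set P : Set Proc := {p' | ∃ g', Represents tr p' g' ∧ g' ∈ T} with hPdef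
    have henv' : ∀ Y ∈ fv φ, ∀ p'' g'', Represents tr p'' g'' →
        g'' ∈ Function.update σ X T Y → p'' ∈ Function.update ρ X P Y := by
      intro Y hY p'' g'' hr h''
      by_cases hYX : Y = X
      · subst hYX
        rw [Function.update_self] at h'' ⊢
        exact ⟨g'', hr, h''⟩
      · rw [Function.update_of_ne hYX] at h'' ⊢
        exact henv Y (by simp [fv, hY, hYX]) p'' g'' hr h''
    refine ⟨P, ?_, ⟨g, hrep, hgT⟩⟩
    rintro p' ⟨g', hrel, hg'T⟩
    exact ih (Function.update σ X T) (Function.update ρ X P) henv' p' g' hrel (hT hg'T)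
  | var X =>
    intro p g hrep hg
    exact henv X (by simp [fv]) p g hrep hg

lemma branch_to_lin (φ : HFrm Act) (σ : ℕ → Set (FTrc Act)) (ρ : ℕ → Set Proc)
    (henv : ∀ X ∈ fv φ, ∀ p g, Represents tr p g → p ∈ ρ X → g ∈ σ X) :
    ∀ p g, Represents tr p g → p ∈ bsem tr φ ρ → g ∈ fsem φ σ := by
  induction φ generalizing σ ρ with
  | tt => intro p g _ _; trivial
  | ff => intro p g _ hp; exact absurd hp (Set.notMem_empty p)
  | orf φ ψ ihφ ihψ =>
    intro p g hrep hp
    rcases hp with hp | hp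
    · exact Or.inl (ihφ σ ρ (fun X hX => henv X (by simp [fv, hX])) p g hrep hp)
    · exact Or.inr (ihψ σ ρ (fun X hX => henv X (by simp [fv, hX])) p g hrep hp)
  | andf φ ψ ihφ ihψ =>
    intro p g hrep hp
    exact ⟨ihφ σ ρ (fun X hX => henv X (by simp [fv, hX])) p g hrep hp.1,
           ihψ σ ρ (fun X hX => henv X (by simp [fv, hX])) p g hrep hp.2⟩
  | dia A φ ih =>
    intro p g hrep hp
    obtain ⟨a, ha, q, hq, hmem⟩ := hp
    obtain ⟨g', rfl⟩ := fcons_elim ((hrep.2 [a]).mp ⟨q, hq⟩)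
    exact ⟨a, ha, g', rfl,
      ih σ ρ (fun X hX => henv X (by simpa [fv] using hX)) q g'
        (represents_step hrep hq) hmem⟩
  | box A φ ih =>
    intro p g hrep hp a ha g' hg'
    subst hg'
    obtain ⟨q, hq⟩ := (hrep.2 [a]).mpr (fprefix_cons.mpr fprefix_nil)
    exact ih σ ρ (fun X hX => henv X (by simpa [fv] using hX)) q g'
      (represents_step hrep hq) (hp a ha q hq)
  | fmin X φ ih =>
    intro p g hrep hp
    intro T hT
    set P : Set Proc := {p' | ∀ g', Represents tr p' g' → g' ∈ T} with hPdef
    have henv' : ∀ Y ∈ fv φ, ∀ p'' g'', Represents tr p'' g'' →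
        p'' ∈ Function.update ρ X P Y → g'' ∈ Function.update σ X T Y := by
      intro Y hY p'' g'' hr h''
      by_cases hYX : Y = X
      · subst hYX
        rw [Function.update_self] at h'' ⊢
        exact h'' g'' hr
      · rw [Function.update_of_ne hYX] at h'' ⊢
        exact henv Y (by simp [fv, hY, hYX]) p'' g'' hr h''
    have hPpre : bsem tr φ (Function.update ρ X P) ⊆ P := by
      intro p' hp' g' hrel
      exact hT (ih (Function.update σ X T) (Function.update ρ X P) henv' p' g' hrel hp')
    exact hp P hPpre g hrep
  | fmax X φ ih =>
    intro p g hrep hp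
    obtain ⟨P, hP, hpP⟩ := hp
    set T : Set (FTrc Act) := {g' | ∃ p', Represents tr p' g' ∧ p' ∈ P} with hTdef
    have henv' : ∀ Y ∈ fv φ, ∀ p'' g'', Represents tr p'' g'' →
        p'' ∈ Function.update ρ X P Y → g'' ∈ Function.update σ X T Y := by
      intro Y hY p'' g'' hr h''
      by_cases hYX : Y = X
      · subst hYX
        rw [Function.update_self] at h'' ⊢
        exact ⟨p'', hr, h''⟩
      · rw [Function.update_of_ne hYX] at h'' ⊢
        exact henv Y (by simp [fv, hY, hYX]) p'' g'' hr h''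
    refine ⟨T, ?_, ⟨p, hrep, hpP⟩⟩
    rintro g' ⟨p', hrel, hp'P⟩
    exact ih (Function.update σ X T) (Function.update ρ X P) henv' p' g' hrel (hP hp'P)
  | var X =>
    intro p g hrep hp
    exact henv X (by simp [fv]) p g hrep hp

end Aux

/-- If a process `p` represents the finfinite trace `g`, then `g` satisfies a
closed formula `φ` under the finfinite semantics iff `p` satisfies `φ` under the
branching-time semantics. -/
theorem trace_process_correspondence {Act Proc : Type}
    (tr : Proc → Option Act → Proc → Prop) (p : Proc) (g : FTrc Act)
    (hrep : Represents tr p g) (φ : HFrm Act) (hcl : fv φ = ∅)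
    (σ : ℕ → Set (FTrc Act)) (ρ : ℕ → Set Proc) :
    g ∈ fsem φ σ ↔ p ∈ bsem tr φ ρ := by
  have hvac : ∀ X, X ∈ fv φ → False := by
    intro X hX; rw [hcl] at hX; exact absurd hX (Finset.notMem_empty X)
  constructor
  · intro hg
    exact lin_to_branch φ σ ρ (fun X hX => absurd hX (fun h => hvac X h)) p g hrep hg
  · intro hp
    exact branch_to_lin φ σ ρ (fun X hX => absurd hX (fun h => hvac X h)) p g hrep hp
end

section
/- If process p satisfies an sHML formula φ under branching-time semantics and p subsumes p' (p produces every finfinite trace that p' produces), then p' also satisfies φ. Dually, if p violates a cHML formula φ and p subsumes p', then p' also violates φ. -/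
/-- `Produces tr p g`: the process `p` produces the finfinite trace `g`
(via weak transitions). -/
def Produces {Act Proc : Type} (tr : Proc → Option Act → Proc → Prop)
    (p : Proc) : FTrc Act → Prop
  | Sum.inl s => ∃ q, WSteps tr p s q
  | Sum.inr t => ∃ f : ℕ → Proc, f 0 = p ∧ ∀ i : ℕ, WSteps tr (f i) [t i] (f (i + 1))

/-- The sHML fragment: tt, ff, [A]φ, conjunction, greatest fixpoints, variables. -/
inductive InSHML {Act : Type} : HFrm Act → Prop
  | tt : InSHML HFrm.tt
  | ff : InSHML HFrm.ff
  | box (A : Set Act) {φ : HFrm Act} : InSHML φ → InSHML (HFrm.box A φ)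
  | andf {φ ψ : HFrm Act} : InSHML φ → InSHML ψ → InSHML (HFrm.andf φ ψ)
  | fmax (X : ℕ) {φ : HFrm Act} : InSHML φ → InSHML (HFrm.fmax X φ)
  | var (X : ℕ) : InSHML (HFrm.var X)

/-- The cHML fragment: tt, ff, ⟨A⟩φ, disjunction, least fixpoints, variables. -/
inductive InCHML {Act : Type} : HFrm Act → Prop
  | tt : InCHML HFrm.tt
  | ff : InCHML HFrm.ff
  | dia (A : Set Act) {φ : HFrm Act} : InCHML φ → InCHML (HFrm.dia A φ)
  | orf {φ ψ : HFrm Act} : InCHML φ → InCHML ψ → InCHML (HFrm.orf φ ψ)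
  | fmin (X : ℕ) {φ : HFrm Act} : InCHML φ → InCHML (HFrm.fmin X φ)
  | var (X : ℕ) : InCHML (HFrm.var X)

section Aux

variable {Act Proc : Type} {tr : Proc → Option Act → Proc → Prop}

/-- `p` produces the finite trace `s`. -/
def ProdL (tr : Proc → Option Act → Proc → Prop) (p : Proc) (s : List Act) : Prop :=
  ∃ q, WSteps tr p s q

lemma wsteps_append {p r q : Proc} {l1 l2 : List Act}
    (h1 : WSteps tr p l1 r) (h2 : WSteps tr r l2 q) : WSteps tr p (l1 ++ l2) q := by
  induction h1 with
  | refl => exact h2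
  | tau h _ ih => exact WSteps.tau h (ih h2)
  | act h _ ih => exact WSteps.act h (ih h2)

lemma wsteps_cons_ex {p q : Proc} {a : Act} {s : List Act}
    (h : WSteps tr p (a :: s) q) : ∃ r, WSteps tr p [a] r ∧ WSteps tr r s q := by
  generalize hl : a :: s = l at h
  induction h with
  | refl => simp at hl
  | tau h1 _ ih =>
    obtain ⟨r, hr1, hr2⟩ := ih hl
    exact ⟨r, WSteps.tau h1 hr1, hr2⟩
  | act h1 h2 _ =>
    injection hl with e1 e2
    subst e1; subst e2
    exact ⟨_, WSteps.act h1 (WSteps.refl _), h2⟩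

lemma prodL_cons {p : Proc} {a : Act} {s : List Act} :
    ProdL tr p (a :: s) ↔ ∃ r, WSteps tr p [a] r ∧ ProdL tr r s := by
  constructor
  · rintro ⟨q, hq⟩
    obtain ⟨r, hr1, hr2⟩ := wsteps_cons_ex hq
    exact ⟨r, hr1, q, hr2⟩
  · rintro ⟨r, hr, q, hq⟩
    exact ⟨q, wsteps_append (l1 := [a]) hr hq⟩

lemma update_pt_subset {ρ ρ' : ℕ → Set Proc} (h : ∀ Y, ρ Y ⊆ ρ' Y) (X : ℕ) (P : Set Proc) :
    ∀ Y, Function.update ρ X P Y ⊆ Function.update ρ' X P Y := by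
  intro Y
  rcases eq_or_ne Y X with rfl | hne
  · simp
  · simp [Function.update_of_ne hne]
    exact h Y

lemma bsem_mono (φ : HFrm Act) :
    ∀ {ρ ρ' : ℕ → Set Proc}, (∀ Y, ρ Y ⊆ ρ' Y) → bsem tr φ ρ ⊆ bsem tr φ ρ' := by
  induction φ with
  | tt => intro ρ ρ' _; simp [bsem]
  | ff => intro ρ ρ' _; simp [bsem]
  | orf φ ψ ihφ ihψ =>
    intro ρ ρ' h
    exact Set.union_subset_union (ihφ h) (ihψ h)
  | andf φ ψ ihφ ihψ =>
    intro ρ ρ' h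
    exact Set.inter_subset_inter (ihφ h) (ihψ h)
  | dia A φ ih =>
    intro ρ ρ' h p hp
    obtain ⟨a, ha, q, hq, hmem⟩ := hp
    exact ⟨a, ha, q, hq, ih h hmem⟩
  | box A φ ih =>
    intro ρ ρ' h p hp a ha q hq
    exact ih h (hp a ha q hq)
  | fmin X φ ih =>
    intro ρ ρ' h p hp
    intro P hP
    exact hp P (fun q hq => hP (ih (update_pt_subset h X P) hq))
  | fmax X φ ih =>
    intro ρ ρ' h p hp
    obtain ⟨P, hP, hpP⟩ := hp
    exact ⟨P, fun q hq => ih (update_pt_subset h X P) (hP hq), hpP⟩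
  | var X =>
    intro ρ ρ' h
    exact h X

lemma bsem_congr (φ : HFrm Act) :
    ∀ {ρ ρ' : ℕ → Set Proc}, (∀ Y ∈ fv φ, ρ Y = ρ' Y) → bsem tr φ ρ = bsem tr φ ρ' := by
  induction φ with
  | tt => intro ρ ρ' _; rfl
  | ff => intro ρ ρ' _; rfl
  | orf φ ψ ihφ ihψ =>
    intro ρ ρ' h
    have h1 : ∀ Y ∈ fv φ, ρ Y = ρ' Y := fun Y hY => h Y (by simp [fv, hY])
    have h2 : ∀ Y ∈ fv ψ, ρ Y = ρ' Y := fun Y hY => h Y (by simp [fv, hY])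
    show bsem tr φ ρ ∪ bsem tr ψ ρ = _
    rw [ihφ h1, ihψ h2]; rfl
  | andf φ ψ ihφ ihψ =>
    intro ρ ρ' h
    have h1 : ∀ Y ∈ fv φ, ρ Y = ρ' Y := fun Y hY => h Y (by simp [fv, hY])
    have h2 : ∀ Y ∈ fv ψ, ρ Y = ρ' Y := fun Y hY => h Y (by simp [fv, hY])
    show bsem tr φ ρ ∩ bsem tr ψ ρ = _
    rw [ihφ h1, ihψ h2]; rfl
  | dia A φ ih =>
    intro ρ ρ' h
    have := ih (fun Y hY => h Y (by simpa [fv] using hY))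
    show {p | ∃ a ∈ A, ∃ q, WSteps tr p [a] q ∧ q ∈ bsem tr φ ρ} = _
    rw [this]; rfl
  | box A φ ih =>
    intro ρ ρ' h
    have := ih (fun Y hY => h Y (by simpa [fv] using hY))
    show {p | ∀ a ∈ A, ∀ q, WSteps tr p [a] q → q ∈ bsem tr φ ρ} = _
    rw [this]; rfl
  | fmin X φ ih =>
    intro ρ ρ' h
    have key : ∀ P : Set Proc,
        bsem tr φ (Function.update ρ X P) = bsem tr φ (Function.update ρ' X P) := by
      intro P
      apply ih
      intro Y hY
      rcases eq_or_ne Y X with rfl | hne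
      · simp
      · rw [Function.update_of_ne hne, Function.update_of_ne hne]
        exact h Y (by simp [fv, hY, hne])
    show ⋂₀ {P | bsem tr φ (Function.update ρ X P) ⊆ P}
        = ⋂₀ {P | bsem tr φ (Function.update ρ' X P) ⊆ P}
    have : {P : Set Proc | bsem tr φ (Function.update ρ X P) ⊆ P}
        = {P | bsem tr φ (Function.update ρ' X P) ⊆ P} := by
      ext P
      simp only [Set.mem_setOf_eq, key]
    rw [this]
  | fmax X φ ih =>
    intro ρ ρ' h
    have key : ∀ P : Set Proc,
        bsem tr φ (Function.update ρ X P) = bsem tr φ (Function.update ρ' X P) := by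
      intro P
      apply ih
      intro Y hY
      rcases eq_or_ne Y X with rfl | hne
      · simp
      · rw [Function.update_of_ne hne, Function.update_of_ne hne]
        exact h Y (by simp [fv, hY, hne])
    show ⋃₀ {P | P ⊆ bsem tr φ (Function.update ρ X P)}
        = ⋃₀ {P | P ⊆ bsem tr φ (Function.update ρ' X P)}
    have : {P : Set Proc | P ⊆ bsem tr φ (Function.update ρ X P)}
        = {P | P ⊆ bsem tr φ (Function.update ρ' X P)} := by
      ext P
      simp only [Set.mem_setOf_eq, key]
    rw [this]
  | var X =>
    intro ρ ρ' h
    exact h X (by simp [fv])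

/-- Bad-trace semantics for sHML formulas. -/
def tsemS {Act : Type} : HFrm Act → (ℕ → Set (List Act)) → Set (List Act)
  | HFrm.tt, _ => ∅
  | HFrm.ff, _ => {[]}
  | HFrm.andf φ ψ, σ => tsemS φ σ ∪ tsemS ψ σ
  | HFrm.box A φ, σ => {s | ∃ a ∈ A, ∃ t ∈ tsemS φ σ, s = a :: t}
  | HFrm.fmax X φ, σ => ⋂₀ {S | tsemS φ (Function.update σ X S) ⊆ S}
  | HFrm.var X, σ => σ X
  | _, _ => ∅

/-- Good-trace semantics for cHML formulas. -/
def tsemC {Act : Type} : HFrm Act → (ℕ → Set (List Act)) → Set (List Act)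
  | HFrm.tt, _ => {[]}
  | HFrm.ff, _ => ∅
  | HFrm.orf φ ψ, σ => tsemC φ σ ∪ tsemC ψ σ
  | HFrm.dia A φ, σ => {s | ∃ a ∈ A, ∃ t ∈ tsemC φ σ, s = a :: t}
  | HFrm.fmin X φ, σ => ⋂₀ {S | tsemC φ (Function.update σ X S) ⊆ S}
  | HFrm.var X, σ => σ X
  | _, _ => ∅

lemma update_pt_subset' {σ σ' : ℕ → Set (List Act)} (h : ∀ Y, σ Y ⊆ σ' Y) (X : ℕ)
    (S : Set (List Act)) :
    ∀ Y, Function.update σ X S Y ⊆ Function.update σ' X S Y := by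
  intro Y
  rcases eq_or_ne Y X with rfl | hne
  · simp
  · simp [Function.update_of_ne hne]
    exact h Y

lemma tsemS_mono (φ : HFrm Act) :
    ∀ {σ σ' : ℕ → Set (List Act)}, (∀ Y, σ Y ⊆ σ' Y) → tsemS φ σ ⊆ tsemS φ σ' := by
  induction φ with
  | tt => intro σ σ' _; simp [tsemS]
  | ff => intro σ σ' _; simp [tsemS]
  | orf φ ψ _ _ => intro σ σ' _; simp [tsemS]
  | andf φ ψ ihφ ihψ =>
    intro σ σ' h
    exact Set.union_subset_union (ihφ h) (ihψ h)
  | dia A φ _ => intro σ σ' _; simp [tsemS]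
  | box A φ ih =>
    intro σ σ' h s hs
    obtain ⟨a, ha, t, ht, rfl⟩ := hs
    exact ⟨a, ha, t, ih h ht, rfl⟩
  | fmin X φ _ => intro σ σ' _; simp [tsemS]
  | fmax X φ ih =>
    intro σ σ' h s hs S hS
    exact hs S (fun t ht => hS (ih (update_pt_subset' h X S) ht))
  | var X => intro σ σ' h; exact h X

lemma tsemC_mono (φ : HFrm Act) :
    ∀ {σ σ' : ℕ → Set (List Act)}, (∀ Y, σ Y ⊆ σ' Y) → tsemC φ σ ⊆ tsemC φ σ' := by
  induction φ with
  | tt => intro σ σ' _; simp [tsemC]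
  | ff => intro σ σ' _; simp [tsemC]
  | orf φ ψ ihφ ihψ =>
    intro σ σ' h
    exact Set.union_subset_union (ihφ h) (ihψ h)
  | andf φ ψ _ _ => intro σ σ' _; simp [tsemC]
  | dia A φ ih =>
    intro σ σ' h s hs
    obtain ⟨a, ha, t, ht, rfl⟩ := hs
    exact ⟨a, ha, t, ih h ht, rfl⟩
  | box A φ _ => intro σ σ' _; simp [tsemC]
  | fmin X φ ih =>
    intro σ σ' h s hs S hS
    exact hs S (fun t ht => hS (ih (update_pt_subset' h X S) ht))
  | fmax X φ _ => intro σ σ' _; simp [tsemC]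
  | var X => intro σ σ' h; exact h X

/-- `Good tr S` : processes producing no trace in `S`. -/
def Good (tr : Proc → Option Act → Proc → Prop) (S : Set (List Act)) : Set Proc :=
  {p | ∀ s ∈ S, ¬ ProdL tr p s}

/-- `Hit tr S` : processes producing some trace in `S`. -/
def Hit (tr : Proc → Option Act → Proc → Prop) (S : Set (List Act)) : Set Proc :=
  {p | ∃ s ∈ S, ProdL tr p s}

lemma good_anti {S T : Set (List Act)} (h : S ⊆ T) : Good tr T ⊆ Good tr S :=
  fun _ hp s hs => hp s (h hs)

lemma hit_mono {S T : Set (List Act)} (h : S ⊆ T) : Hit tr S ⊆ Hit tr T :=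
  fun _ ⟨s, hs, hp⟩ => ⟨s, h hs, hp⟩

/-- Linear characterization of sHML: satisfaction is determined by finite traces. -/
lemma shml_char {φ : HFrm Act} (hφ : InSHML φ) :
    ∀ {ρ : ℕ → Set Proc} {σ : ℕ → Set (List Act)},
      (∀ Y, ρ Y = Good tr (σ Y)) →
      bsem tr φ ρ = Good tr (tsemS φ σ) := by
  induction hφ with
  | tt =>
    intro ρ σ _
    ext p; simp [bsem, tsemS, Good]
  | ff =>
    intro ρ σ _
    ext p
    simp only [bsem, Set.mem_empty_iff_false, Good, tsemS, Set.mem_setOf_eq, false_iff]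
    intro h
    exact h [] rfl ⟨p, WSteps.refl p⟩
  | box A hsub ih =>
    intro ρ σ hrel
    ext p
    simp only [bsem, Set.mem_setOf_eq, ih hrel, Good, tsemS]
    constructor
    · rintro h s ⟨a, ha, t, ht, rfl⟩ hprod
      obtain ⟨r, hr1, hr2⟩ := prodL_cons.mp hprod
      exact h a ha r hr1 t ht hr2
    · intro h a ha q hq t ht hprod
      exact h (a :: t) ⟨a, ha, t, ht, rfl⟩ (prodL_cons.mpr ⟨q, hq, hprod⟩)
  | andf hsub1 hsub2 ih1 ih2 =>
    intro ρ σ hrel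
    ext p
    simp only [bsem, Set.mem_inter_iff, ih1 hrel, ih2 hrel, Good, tsemS,
      Set.mem_setOf_eq, Set.mem_union]
    constructor
    · rintro ⟨h1, h2⟩ s (hs | hs) <;> [exact h1 s hs; exact h2 s hs]
    · intro h
      exact ⟨fun s hs => h s (Or.inl hs), fun s hs => h s (Or.inr hs)⟩
  | fmax X hsub ih =>
    intro ρ σ hrel
    rename_i φ'
    -- F and G
    set F : Set Proc → Set Proc := fun P => bsem tr φ' (Function.update ρ X P) with hF
    set G : Set (List Act) → Set (List Act) :=
      fun S => tsemS φ' (Function.update σ X S) with hG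
    have hrel' : ∀ S : Set (List Act),
        ∀ Y, Function.update ρ X (Good tr S) Y = Good tr (Function.update σ X S Y) := by
      intro S Y
      rcases eq_or_ne Y X with rfl | hne
      · simp
      · rw [Function.update_of_ne hne, Function.update_of_ne hne]
        exact hrel Y
    have hFG : ∀ S : Set (List Act), F (Good tr S) = Good tr (G S) := by
      intro S
      exact ih (hrel' S)
    have hFmono : ∀ {P Q : Set Proc}, P ⊆ Q → F P ⊆ F Q := by
      intro P Q h
      apply bsem_mono φ'
      intro Y
      rcases eq_or_ne Y X with rfl | hne
      · simpa using h
      · simp [Function.update_of_ne hne]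
    have hGmono : ∀ {S T : Set (List Act)}, S ⊆ T → G S ⊆ G T := by
      intro S T h
      apply tsemS_mono φ'
      intro Y
      rcases eq_or_ne Y X with rfl | hne
      · simpa using h
      · simp [Function.update_of_ne hne]
    set lfpG : Set (List Act) := ⋂₀ {S | G S ⊆ S} with hlfpG
    have hGpre : G lfpG ⊆ lfpG := by
      intro s hs
      intro S hS
      have : lfpG ⊆ S := Set.sInter_subset_of_mem hS
      exact hS (hGmono this hs)
    have LHS : bsem tr (HFrm.fmax X φ') ρ = ⋃₀ {P | P ⊆ F P} := rfl
    have RHS : tsemS (HFrm.fmax X φ') σ = lfpG := rfl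
    rw [LHS, RHS]
    apply Set.Subset.antisymm
    · -- gfp F ⊆ Good lfpG
      rintro p ⟨P, hP, hpP⟩
      set gfpF : Set Proc := ⋃₀ {P | P ⊆ F P} with hgfpF
      have hpgfp : p ∈ gfpF := ⟨P, hP, hpP⟩
      set Sstar : Set (List Act) := {s | ∀ q, q ∈ gfpF → ¬ ProdL tr q s} with hSstar
      have hgood : gfpF ⊆ Good tr Sstar := by
        intro q hq s hs
        exact hs q hq
      have hgfppost : gfpF ⊆ F gfpF := by
        rintro q ⟨Q, hQ, hqQ⟩
        have hQsub : Q ⊆ gfpF := fun r hr => Set.mem_sUnion.mpr ⟨Q, hQ, hr⟩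
        exact hFmono hQsub (hQ hqQ)
      have hGS : G Sstar ⊆ Sstar := by
        intro s hs q hq hprod
        have : q ∈ Good tr (G Sstar) := by
          rw [← hFG]
          exact hFmono hgood (hgfppost hq)
        exact this s hs hprod
      intro s hs
      have hmem : Sstar ∈ {S | G S ⊆ S} := hGS
      have : s ∈ Sstar := Set.sInter_subset_of_mem hmem hs
      exact this p hpgfp
    · -- Good lfpG ⊆ gfp F
      intro p hp
      refine ⟨Good tr lfpG, ?_, hp⟩
      show Good tr lfpG ⊆ F (Good tr lfpG)
      rw [hFG]
      exact good_anti hGpre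
  | var X =>
    intro ρ σ hrel
    exact hrel X

/-- Linear characterization of cHML: satisfaction is determined by finite traces. -/
lemma chml_char {φ : HFrm Act} (hφ : InCHML φ) :
    ∀ {ρ : ℕ → Set Proc} {σ : ℕ → Set (List Act)},
      (∀ Y, ρ Y = Hit tr (σ Y)) →
      bsem tr φ ρ = Hit tr (tsemC φ σ) := by
  induction hφ with
  | tt =>
    intro ρ σ _
    ext p
    simp only [bsem, Set.mem_univ, Hit, tsemC, Set.mem_setOf_eq, true_iff]
    exact ⟨[], rfl, p, WSteps.refl p⟩
  | ff =>
    intro ρ σ _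
    ext p
    simp [bsem, tsemC, Hit]
  | dia A hsub ih =>
    intro ρ σ hrel
    ext p
    simp only [bsem, Set.mem_setOf_eq, ih hrel, Hit, tsemC]
    constructor
    · rintro ⟨a, ha, q, hq, s, hs, hprod⟩
      exact ⟨a :: s, ⟨a, ha, s, hs, rfl⟩, prodL_cons.mpr ⟨q, hq, hprod⟩⟩
    · rintro ⟨s, ⟨a, ha, t, ht, rfl⟩, hprod⟩
      obtain ⟨r, hr1, hr2⟩ := prodL_cons.mp hprod
      exact ⟨a, ha, r, hr1, t, ht, hr2⟩
  | orf hsub1 hsub2 ih1 ih2 =>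
    intro ρ σ hrel
    ext p
    simp only [bsem, Set.mem_union, ih1 hrel, ih2 hrel, Hit, tsemC, Set.mem_setOf_eq]
    constructor
    · rintro (⟨s, hs, hp⟩ | ⟨s, hs, hp⟩)
      · exact ⟨s, Or.inl hs, hp⟩
      · exact ⟨s, Or.inr hs, hp⟩
    · rintro ⟨s, hs | hs, hp⟩
      · exact Or.inl ⟨s, hs, hp⟩
      · exact Or.inr ⟨s, hs, hp⟩
  | fmin X hsub ih =>
    intro ρ σ hrel
    rename_i φ'
    set F : Set Proc → Set Proc := fun P => bsem tr φ' (Function.update ρ X P) with hF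
    set G : Set (List Act) → Set (List Act) :=
      fun S => tsemC φ' (Function.update σ X S) with hG
    have hrel' : ∀ S : Set (List Act),
        ∀ Y, Function.update ρ X (Hit tr S) Y = Hit tr (Function.update σ X S Y) := by
      intro S Y
      rcases eq_or_ne Y X with rfl | hne
      · simp
      · rw [Function.update_of_ne hne, Function.update_of_ne hne]
        exact hrel Y
    have hFG : ∀ S : Set (List Act), F (Hit tr S) = Hit tr (G S) := by
      intro S
      exact ih (hrel' S)
    have hFmono : ∀ {P Q : Set Proc}, P ⊆ Q → F P ⊆ F Q := by
      intro P Q h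
      apply bsem_mono φ'
      intro Y
      rcases eq_or_ne Y X with rfl | hne
      · simpa using h
      · simp [Function.update_of_ne hne]
    have hGmono : ∀ {S T : Set (List Act)}, S ⊆ T → G S ⊆ G T := by
      intro S T h
      apply tsemC_mono φ'
      intro Y
      rcases eq_or_ne Y X with rfl | hne
      · simpa using h
      · simp [Function.update_of_ne hne]
    set lfpG : Set (List Act) := ⋂₀ {S | G S ⊆ S} with hlfpG
    set lfpF : Set Proc := ⋂₀ {P | F P ⊆ P} with hlfpF
    have hGpre : G lfpG ⊆ lfpG := by
      intro s hs S hS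
      exact hS (hGmono (Set.sInter_subset_of_mem hS) hs)
    have hFpre : F lfpF ⊆ lfpF := by
      intro q hq P hP
      exact hP (hFmono (Set.sInter_subset_of_mem hP) hq)
    have LHS : bsem tr (HFrm.fmin X φ') ρ = lfpF := rfl
    have RHS : tsemC (HFrm.fmin X φ') σ = lfpG := rfl
    rw [LHS, RHS]
    apply Set.Subset.antisymm
    · -- lfp F ⊆ Hit lfpG
      have : F (Hit tr lfpG) ⊆ Hit tr lfpG := by
        rw [hFG]
        exact hit_mono hGpre
      exact Set.sInter_subset_of_mem this
    · -- Hit lfpG ⊆ lfp F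
      rintro p ⟨s, hs, hprod⟩
      set Sstar : Set (List Act) := {s | ∀ q, ProdL tr q s → q ∈ lfpF} with hSstar
      have hhit : Hit tr Sstar ⊆ lfpF := by
        rintro q ⟨t, ht, hq⟩
        exact ht q hq
      have hGS : G Sstar ⊆ Sstar := by
        intro t ht q hq
        have : q ∈ Hit tr (G Sstar) := ⟨t, ht, hq⟩
        rw [← hFG] at this
        exact hFpre (hFmono hhit this)
      have hmem : Sstar ∈ {S | G S ⊆ S} := hGS
      have : s ∈ Sstar := Set.sInter_subset_of_mem hmem hs
      exact this p hprod
  | var X =>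
    intro ρ σ hrel
    exact hrel X

end Aux

/-- Subsumption: if `p` satisfies a closed sHML formula and `p` produces every
finfinite trace that `p'` produces, then `p'` satisfies the formula too; dually,
if `p` violates a closed cHML formula, so does `p'`. -/
theorem subsumption {Act Proc : Type} (tr : Proc → Option Act → Proc → Prop)
    (φ : HFrm Act) (hcl : fv φ = ∅) (ρ : ℕ → Set Proc) (p p' : Proc)
    (hsub : ∀ g : FTrc Act, Produces tr p' g → Produces tr p g) :
    (InSHML φ → p ∈ bsem tr φ ρ → p' ∈ bsem tr φ ρ) ∧
    (InCHML φ → p ∉ bsem tr φ ρ → p' ∉ bsem tr φ ρ) := by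
  have hsubL : ∀ s : List Act, ProdL tr p' s → ProdL tr p s := by
    intro s hs
    exact hsub (Sum.inl s) hs
  have hvac : ∀ Y ∈ fv φ, ∀ {α : Type} (f g : ℕ → Set α), f Y = g Y := by
    intro Y hY
    rw [hcl] at hY
    simp at hY
  constructor
  · intro hS hp
    -- replace ρ by the Good-environment
    have hρ0 : ∀ Y ∈ fv φ, ρ Y = (fun _ => Good tr Set.univ : ℕ → Set Proc) Y := by
      intro Y hY; rw [hcl] at hY; simp at hY
    rw [bsem_congr φ hρ0] at hp ⊢
    have hrel : ∀ Y : ℕ, (fun _ => Good tr Set.univ : ℕ → Set Proc) Y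
        = Good tr ((fun _ => Set.univ : ℕ → Set (List Act)) Y) := fun _ => rfl
    rw [shml_char hS hrel] at hp ⊢
    intro s hs hprod
    exact hp s hs (hsubL s hprod)
  · intro hC hp
    have hρ0 : ∀ Y ∈ fv φ, ρ Y = (fun _ => Hit tr (∅ : Set (List Act)) : ℕ → Set Proc) Y := by
      intro Y hY; rw [hcl] at hY; simp at hY
    rw [bsem_congr φ hρ0] at hp ⊢
    have hrel : ∀ Y : ℕ, (fun _ => Hit tr (∅ : Set (List Act)) : ℕ → Set Proc) Y
        = Hit tr ((fun _ => (∅ : Set (List Act))) Y) := fun _ => rfl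
    rw [chml_char hC hrel] at hp ⊢
    rintro ⟨s, hs, hprod⟩
    exact hp ⟨s, hs, hsubL s hprod⟩
end

section
/- For a process p and formula φ ∈ sHML, p satisfies φ under branching-time semantics if and only if every finfinite trace produced by p satisfies φ under finfinite semantics. -/
namespace ShmlProofAux

variable {Act Proc : Type} (tr : Proc → Option Act → Proc → Prop)

lemma wsteps_append : ∀ {p q : Proc} {l : List Act}, WSteps tr p l q →
    ∀ {r : Proc} {l' : List Act}, WSteps tr q l' r → WSteps tr p (l ++ l') r := by
  intro p q l h
  induction h with
  | refl => intro r l' h'; simpa using h'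
  | tau ht _ ih => intro r l' h'; exact WSteps.tau ht (ih h')
  | act ha _ ih => intro r l' h'; exact WSteps.act ha (ih h')

lemma wsteps_cons {p q : Proc} {a : Act} {l l0 : List Act}
    (h : WSteps tr p l0 q) (hl : l0 = a :: l) :
    ∃ m, WSteps tr p [a] m ∧ WSteps tr m l q := by
  induction h with
  | refl => cases hl
  | tau ht _ ih =>
      obtain ⟨m, h1, h2⟩ := ih hl
      exact ⟨m, WSteps.tau ht h1, h2⟩
  | act ha h _ =>
      cases hl
      exact ⟨_, WSteps.act ha (WSteps.refl _), h⟩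

lemma fsem_mono {φ : HFrm Act} (h : InSHML φ) :
    ∀ {σ σ' : ℕ → Set (FTrc Act)}, (∀ X, σ X ⊆ σ' X) → fsem φ σ ⊆ fsem φ σ' := by
  induction h with
  | tt => intro σ σ' _ g hg; exact hg
  | ff => intro σ σ' _ g hg; exact hg.elim
  | box A _ ih =>
      intro σ σ' hσ g hg
      simp only [fsem, Set.mem_setOf_eq] at hg ⊢
      intro a ha g' hg'
      exact ih hσ (hg a ha g' hg')
  | andf _ _ ih1 ih2 => intro σ σ' hσ g hg; exact ⟨ih1 hσ hg.1, ih2 hσ hg.2⟩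
  | fmax X _ ih =>
      intro σ σ' hσ g hg
      simp only [fsem, Set.mem_sUnion, Set.mem_setOf_eq] at hg ⊢
      obtain ⟨T, hT, hgT⟩ := hg
      refine ⟨T, ?_, hgT⟩
      intro g' hg'
      refine ih ?_ (hT hg')
      intro Y
      rcases eq_or_ne Y X with rfl | hne
      · simp [Function.update_self]
      · rw [Function.update_of_ne hne, Function.update_of_ne hne]; exact hσ Y
  | var X => intro σ σ' hσ g hg; exact hσ X hg

lemma fsem_fmax_unfold {X : ℕ} {φ : HFrm Act} (h : InSHML φ)
    (σ : ℕ → Set (FTrc Act)) :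
    fsem (HFrm.fmax X φ) σ ⊆
      fsem φ (Function.update σ X (fsem (HFrm.fmax X φ) σ)) := by
  intro g hg
  obtain ⟨T, hT, hgT⟩ := hg
  refine fsem_mono h ?_ (hT hgT)
  intro Y
  rcases eq_or_ne Y X with rfl | hne
  · rw [Function.update_self, Function.update_self]
    intro g' hg'
    exact ⟨T, hT, hg'⟩
  · rw [Function.update_of_ne hne, Function.update_of_ne hne]

lemma sound {φ : HFrm Act} (h : InSHML φ) :
    ∀ (ρ : ℕ → Set Proc) (σ : ℕ → Set (FTrc Act)),
      (∀ X ∈ fv φ, ∀ p ∈ ρ X, ∀ g, Produces tr p g → g ∈ σ X) →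
      ∀ p ∈ bsem tr φ ρ, ∀ g, Produces tr p g → g ∈ fsem φ σ := by
  induction h with
  | tt => intro ρ σ _ p _ g _; exact Set.mem_univ g
  | ff => intro ρ σ _ p hp; exact hp.elim
  | box A hφ ih =>
      intro ρ σ hgood p hp g hg
      simp only [bsem, Set.mem_setOf_eq] at hp
      simp only [fsem, Set.mem_setOf_eq]
      rintro a ha g' rfl
      cases g' with
      | inl s =>
          simp only [Produces, fcons] at hg
          obtain ⟨q, hq⟩ := hg
          obtain ⟨m, h1, h2⟩ := wsteps_cons tr hq rfl
          exact ih ρ σ hgood m (hp a ha m h1) (Sum.inl s) ⟨q, h2⟩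
      | inr u =>
          simp only [Produces, fcons] at hg
          obtain ⟨f, hf0, hfs⟩ := hg
          have h1 : WSteps tr p [a] (f 1) := by
            have := hfs 0
            rw [hf0] at this
            exact this
          refine ih ρ σ hgood (f 1) (hp a ha (f 1) h1) (Sum.inr u)
            ⟨fun i => f (i + 1), rfl, ?_⟩
          intro i
          exact hfs (i + 1)
  | andf _ _ ih1 ih2 =>
      intro ρ σ hgood p hp g hg
      exact ⟨ih1 ρ σ (fun Y hY => hgood Y (Finset.mem_union_left _ hY)) p hp.1 g hg,
        ih2 ρ σ (fun Y hY => hgood Y (Finset.mem_union_right _ hY)) p hp.2 g hg⟩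
  | fmax X hφ ih =>
      intro ρ σ hgood p hp g hg
      simp only [bsem, Set.mem_sUnion, Set.mem_setOf_eq] at hp
      obtain ⟨P, hP, hpP⟩ := hp
      simp only [fsem, Set.mem_sUnion, Set.mem_setOf_eq]
      refine ⟨{g | ∃ q ∈ P, Produces tr q g}, ?_, ⟨p, hpP, hg⟩⟩
      rintro g' ⟨q, hqP, hq⟩
      refine ih (Function.update ρ X P)
        (Function.update σ X {g | ∃ q ∈ P, Produces tr q g}) ?_ q (hP hqP) g' hq
      intro Y hY p' hp' g'' hg''
      rcases eq_or_ne Y X with rfl | hne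
      · rw [Function.update_self] at hp'
        rw [Function.update_self]
        exact ⟨p', hp', hg''⟩
      · rw [Function.update_of_ne hne] at hp'
        rw [Function.update_of_ne hne]
        refine hgood Y ?_ p' hp' g'' hg''
        simp only [fv, Finset.mem_sdiff, Finset.mem_singleton]
        exact ⟨hY, hne⟩
  | var X =>
      intro ρ σ hgood p hp g hg
      exact hgood X (by simp [fv]) p hp g hg

lemma complete {φ : HFrm Act} (h : InSHML φ) :
    ∀ (ρ : ℕ → Set Proc) (σ : ℕ → Set (FTrc Act)),
      (∀ X ∈ fv φ, ∀ p : Proc, (∀ g, Produces tr p g → g ∈ σ X) → p ∈ ρ X) →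
      ∀ p : Proc, (∀ g, Produces tr p g → g ∈ fsem φ σ) → p ∈ bsem tr φ ρ := by
  induction h with
  | tt => intro ρ σ _ p _; exact Set.mem_univ p
  | ff =>
      intro ρ σ _ p hp
      exact (hp (Sum.inl []) ⟨p, WSteps.refl p⟩).elim
  | box A hφ ih =>
      intro ρ σ hgood p hp
      simp only [bsem, Set.mem_setOf_eq]
      intro a ha q hq
      refine ih ρ σ hgood q ?_
      intro g hg
      cases g with
      | inl s =>
          obtain ⟨r, hr⟩ := hg
          have hprod : Produces tr p (Sum.inl (a :: s)) :=
            ⟨r, wsteps_append tr hq hr⟩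
          have := hp _ hprod
          simp only [fsem, Set.mem_setOf_eq] at this
          exact this a ha (Sum.inl s) rfl
      | inr u =>
          obtain ⟨f, hf0, hfs⟩ := hg
          have hprod : Produces tr p (fcons a (Sum.inr u)) := by
            refine ⟨fun i => match i with | 0 => p | j + 1 => f j, rfl, ?_⟩
            intro i
            cases i with
            | zero =>
                show WSteps tr p [a] (f 0)
                rw [hf0]; exact hq
            | succ j => exact hfs j
          have := hp _ hprod
          simp only [fsem, Set.mem_setOf_eq] at this
          exact this a ha (Sum.inr u) rfl
  | andf _ _ ih1 ih2 =>
      intro ρ σ hgood p hp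
      exact ⟨ih1 ρ σ (fun Y hY => hgood Y (Finset.mem_union_left _ hY)) p
          (fun g hg => (hp g hg).1),
        ih2 ρ σ (fun Y hY => hgood Y (Finset.mem_union_right _ hY)) p
          (fun g hg => (hp g hg).2)⟩
  | @fmax X φ hφ ih =>
      intro ρ σ hgood p hp
      simp only [bsem, Set.mem_sUnion, Set.mem_setOf_eq]
      refine ⟨{q | ∀ g, Produces tr q g → g ∈ fsem (HFrm.fmax X φ) σ}, ?_, hp⟩
      intro q hq
      refine ih (Function.update ρ X
          {q | ∀ g, Produces tr q g → g ∈ fsem (HFrm.fmax X φ) σ})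
        (Function.update σ X (fsem (HFrm.fmax X φ) σ)) ?_ q ?_
      · intro Y hY p' hp'
        rcases eq_or_ne Y X with rfl | hne
        · rw [Function.update_self] at hp'
          rw [Function.update_self]
          exact hp'
        · rw [Function.update_of_ne hne] at hp'
          rw [Function.update_of_ne hne]
          refine hgood Y ?_ p' hp'
          simp only [fv, Finset.mem_sdiff, Finset.mem_singleton]
          exact ⟨hY, hne⟩
      · intro g hg
        exact fsem_fmax_unfold hφ σ (hq g hg)
  | var X =>
      intro ρ σ hgood p hp
      exact hgood X (by simp [fv]) p hp

end ShmlProofAux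

/-- For a process `p` and a closed sHML formula `φ`: `p` satisfies `φ` under the
branching-time semantics iff every finfinite trace produced by `p` satisfies `φ`
under the finfinite semantics. -/
theorem shml_branching_iff_all_produced_traces {Act Proc : Type}
    (tr : Proc → Option Act → Proc → Prop) (φ : HFrm Act)
    (hshml : InSHML φ) (hcl : fv φ = ∅)
    (p : Proc) (ρ : ℕ → Set Proc) (σ : ℕ → Set (FTrc Act)) :
    p ∈ bsem tr φ ρ ↔ ∀ g : FTrc Act, Produces tr p g → g ∈ fsem φ σ := by
  constructor
  · intro hp g hg
    exact ShmlProofAux.sound tr hshml ρ σ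
      (fun X hX => by rw [hcl] at hX; exact absurd hX (Finset.notMem_empty X))
      p hp g hg
  · intro h
    exact ShmlProofAux.complete tr hshml ρ σ
      (fun X hX => by rw [hcl] at hX; exact absurd hX (Finset.notMem_empty X))
      p h
end

section
/- (Slim HML triviality) If φ is a slim HML formula and ⟦φ⟧_L = ∅ over infinite traces, then φ = ff; dually if ⟦φ⟧_L = Act^ω then φ = tt. -/
/-- Fixpoint-free HML formulae in slim normal form: truth, falsehood, a
conjunction ⋀_{a∈A}[a]φ_a of box formulae, or a disjunction ⋁_{a∈A}⟨a⟩φ_a of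
diamond formulae (given by a domain `A` and a map of continuations). -/
inductive SlimF (Act : Type) : Type
  | tt : SlimF Act
  | ff : SlimF Act
  | boxes : Set Act → (Act → SlimF Act) → SlimF Act
  | dias : Set Act → (Act → SlimF Act) → SlimF Act

/-- Linear-time semantics of slim HML formulae over infinite traces. -/
def ssem {Act : Type} : SlimF Act → Set (ℕ → Act)
  | SlimF.tt => Set.univ
  | SlimF.ff => ∅
  | SlimF.boxes A f => {t | t 0 ∈ A → (fun i => t (i + 1)) ∈ ssem (f (t 0))}
  | SlimF.dias A f => {t | t 0 ∈ A ∧ (fun i => t (i + 1)) ∈ ssem (f (t 0))}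

/-- Slim formulae: they avoid the trivially redundant subterms. In a disjunction
⋁_{a∈A}⟨a⟩φ_a, the set `A` is nonempty, no `φ_a` is `ff`, and if `A = Act` then
not all `φ_a` are `tt`. In a conjunction ⋀_{a∈A}[a]φ_a, the set `A` is nonempty,
no `φ_a` is `tt`, and if `A = Act` then not all `φ_a` are `ff`. -/
inductive IsSlim {Act : Type} : SlimF Act → Prop
  | tt : IsSlim SlimF.tt
  | ff : IsSlim SlimF.ff
  | boxes (A : Set Act) (f : Act → SlimF Act) :
      A.Nonempty →
      (∀ a ∈ A, IsSlim (f a)) →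
      (∀ a ∈ A, f a ≠ SlimF.tt) →
      ¬ (A = Set.univ ∧ ∀ a ∈ A, f a = SlimF.ff) →
      IsSlim (SlimF.boxes A f)
  | dias (A : Set Act) (f : Act → SlimF Act) :
      A.Nonempty →
      (∀ a ∈ A, IsSlim (f a)) →
      (∀ a ∈ A, f a ≠ SlimF.ff) →
      ¬ (A = Set.univ ∧ ∀ a ∈ A, f a = SlimF.tt) →
      IsSlim (SlimF.dias A f)


private def scons {Act : Type} (a : Act) (t : ℕ → Act) : ℕ → Act :=
  fun n => Nat.casesOn n a t

private lemma scons_zero {Act : Type} (a : Act) (t : ℕ → Act) : scons a t 0 = a := rfl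

private lemma scons_tail {Act : Type} (a : Act) (t : ℕ → Act) :
    (fun i => scons a t (i + 1)) = t := rfl

/-- Slim HML triviality: a slim formula denoting the empty set of infinite traces
is `ff`; dually, a slim formula denoting all infinite traces is `tt`. -/
theorem slim_triviality {Act : Type} [Fintype Act] [Nonempty Act]
    (φ : SlimF Act) (hslim : IsSlim φ) :
    (ssem φ = ∅ → φ = SlimF.ff) ∧ (ssem φ = Set.univ → φ = SlimF.tt) := by
  induction hslim with
  | tt =>
    refine ⟨fun h => absurd h ?_, fun _ => rfl⟩
    simp only [ssem]
    exact (Set.univ_nonempty (α := ℕ → Act)).ne_empty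
  | ff =>
    refine ⟨fun _ => rfl, fun h => absurd h.symm ?_⟩
    simp only [ssem]
    exact (Set.univ_nonempty (α := ℕ → Act)).ne_empty
  | boxes A f hne hs hnt hnf ih =>
    constructor
    · intro h
      exfalso
      by_cases hA : A = Set.univ
      · -- some a with f a ≠ ff, whose semantics is nonempty
        have : ¬ ∀ a ∈ A, f a = SlimF.ff := fun hall => hnf ⟨hA, hall⟩
        push_neg at this
        obtain ⟨a, ha, hfa⟩ := this
        have hsem : ssem (f a) ≠ ∅ := fun he => hfa ((ih a ha).1 he)
        obtain ⟨t, ht⟩ := Set.nonempty_iff_ne_empty.mpr hsem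
        have : scons a t ∈ ssem (SlimF.boxes A f) := by
          simp only [ssem, Set.mem_setOf_eq, scons_zero, scons_tail]
          intro _; exact ht
        rw [h] at this; exact this
      · obtain ⟨a, ha⟩ : ∃ a, a ∉ A := by
          by_contra hc; push_neg at hc
          exact hA (Set.eq_univ_of_forall hc)
        have : scons a (fun _ => a) ∈ ssem (SlimF.boxes A f) := by
          simp only [ssem, Set.mem_setOf_eq, scons_zero]
          intro h'; exact absurd h' ha
        rw [h] at this; exact this
    · intro h
      exfalso
      obtain ⟨a, ha⟩ := hne
      have hfa : f a ≠ SlimF.tt := hnt a ha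
      have hsem : ssem (f a) ≠ Set.univ := fun he => hfa ((ih a ha).2 he)
      obtain ⟨t, ht⟩ : ∃ t, t ∉ ssem (f a) := by
        by_contra hc; push_neg at hc
        exact hsem (Set.eq_univ_of_forall hc)
      have : scons a t ∈ ssem (SlimF.boxes A f) := h ▸ Set.mem_univ _
      simp only [ssem, Set.mem_setOf_eq, scons_zero, scons_tail] at this
      exact ht (this ha)
  | dias A f hne hs hnf hnt ih =>
    constructor
    · intro h
      exfalso
      obtain ⟨a, ha⟩ := hne
      have hfa : f a ≠ SlimF.ff := hnf a ha
      have hsem : ssem (f a) ≠ ∅ := fun he => hfa ((ih a ha).1 he)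
      obtain ⟨t, ht⟩ := Set.nonempty_iff_ne_empty.mpr hsem
      have : scons a t ∈ ssem (SlimF.dias A f) := by
        simp only [ssem, Set.mem_setOf_eq, scons_zero, scons_tail]
        exact ⟨ha, ht⟩
      rw [h] at this; exact this
    · intro h
      exfalso
      by_cases hA : A = Set.univ
      · have : ¬ ∀ a ∈ A, f a = SlimF.tt := fun hall => hnt ⟨hA, hall⟩
        push_neg at this
        obtain ⟨a, ha, hfa⟩ := this
        have hsem : ssem (f a) ≠ Set.univ := fun he => hfa ((ih a ha).2 he)
        obtain ⟨t, ht⟩ : ∃ t, t ∉ ssem (f a) := by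
          by_contra hc; push_neg at hc
          exact hsem (Set.eq_univ_of_forall hc)
        have hm : scons a t ∈ ssem (SlimF.dias A f) := h ▸ Set.mem_univ _
        simp only [ssem, Set.mem_setOf_eq, scons_zero, scons_tail] at hm
        exact ht hm.2
      · obtain ⟨a, ha⟩ : ∃ a, a ∉ A := by
          by_contra hc; push_neg at hc
          exact hA (Set.eq_univ_of_forall hc)
        have hm : scons a (fun _ => a) ∈ ssem (SlimF.dias A f) := h ▸ Set.mem_univ _
        simp only [ssem, Set.mem_setOf_eq, scons_zero] at hm
        exact ha hm.1
end

section
/- If a guarded closed formula φ in the finfinite safety fragment (with only box modalities and greatest fixpoints) is not propositionally inconsistent, then the empty trace ε satisfies φ under finfinite semantics; consequently, if φ is equivalent to ff over finfinite traces then φ is propositionally inconsistent. -/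
/-- Propositional inconsistency of formulae in the safety fragment. -/
inductive PropInc {Act : Type} : HFrm Act → Prop
  | ff : PropInc HFrm.ff
  | andL {φ ψ : HFrm Act} : PropInc φ → PropInc (HFrm.andf φ ψ)
  | andR {φ ψ : HFrm Act} : PropInc ψ → PropInc (HFrm.andf φ ψ)
  | orf {φ ψ : HFrm Act} : PropInc φ → PropInc ψ → PropInc (HFrm.orf φ ψ)
  | fmax (X : ℕ) {φ : HFrm Act} : PropInc φ → PropInc (HFrm.fmax X φ)

private lemma eps_mem {Act : Type} {φ : HFrm Act} (hsafe : InSafe φ) :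
    ∀ σ : ℕ → Set (FTrc Act),
      (∀ Y ∈ fv φ, (Sum.inl [] : FTrc Act) ∈ σ Y) → ¬ PropInc φ →
      (Sum.inl [] : FTrc Act) ∈ fsem φ σ := by
  induction hsafe with
  | tt => intro σ _ _; simp [fsem]
  | ff => intro _ _ h; exact absurd PropInc.ff h
  | box A hφ ih =>
      intro σ _ _
      intro a _ g' hg'
      cases g' with
      | inl s => simp [fcons] at hg'
      | inr t => simp [fcons] at hg'
  | @orf φ₁ ψ₁ hφ hψ ihφ ihψ =>
      intro σ hfv hne
      by_cases hp : PropInc φ₁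
      · right
        exact ihψ σ (fun Y hY => hfv Y (by simp [fv, hY])) (fun h => hne (PropInc.orf hp h))
      · left
        exact ihφ σ (fun Y hY => hfv Y (by simp [fv, hY])) hp
  | andf hφ hψ ihφ ihψ =>
      intro σ hfv hne
      exact ⟨ihφ σ (fun Y hY => hfv Y (by simp [fv, hY])) (fun h => hne (PropInc.andL h)),
             ihψ σ (fun Y hY => hfv Y (by simp [fv, hY])) (fun h => hne (PropInc.andR h))⟩
  | fmax X hφ ih =>
      intro σ hfv hne
      refine ⟨{(Sum.inl [] : FTrc Act)}, ?_, rfl⟩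
      intro g hg
      rw [Set.mem_singleton_iff] at hg; subst hg
      apply ih
      · intro Y hY
        by_cases hYX : Y = X
        · subst hYX; simp [Function.update]
        · rw [Function.update_of_ne hYX]
          exact hfv Y (by simp [fv, hY, hYX])
      · intro h; exact hne (PropInc.fmax X h)
  | var X =>
      intro σ hfv _
      exact hfv X (by simp [fv])

/-- A guarded closed formula of the finfinite safety fragment that is not
propositionally inconsistent is satisfied by the empty trace; consequently, if it
is equivalent to `ff` over finfinite traces then it is propositionally
inconsistent. -/
theorem prop_inconsistent_iff_empty {Act : Type} (φ : HFrm Act)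
    (hsafe : InSafe φ) (hcl : fv φ = ∅) (hg : Guarded ∅ φ)
    (σ : ℕ → Set (FTrc Act)) :
    (¬ PropInc φ → (Sum.inl [] : FTrc Act) ∈ fsem φ σ) ∧
    (fsem φ σ = ∅ → PropInc φ) := by
  have key : ¬ PropInc φ → (Sum.inl [] : FTrc Act) ∈ fsem φ σ := by
    intro h
    exact eps_mem hsafe σ (fun Y hY => by simp [hcl] at hY) h
  refine ⟨key, fun hemp => ?_⟩
  by_contra h
  have := key h
  rw [hemp] at this
  exact this
end
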